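/- Spectrum of the Jacobian at the bifurcation point: Let k = γ_h + ρ_h + α_h, d = β_v Λ_v α_h/(α_v Λ_h), β_h = β_h* := Λ_h α_v² k/(β_v Λ_v α_h), and let J* be the real 5×5 matrix with rows [−α_h, 0, ω_h, 0, −β_h], [0, −k, 0, 0, β_h], [0, γ_h, −(α_h+ω_h), 0, 0], [0, −d, 0, −α_v, 0], [0, d, 0, 0, −α_v]. Then the characteristic polynomial of J* equals λ(λ + k + α_v)(λ + α_h)(λ + α_v)(λ + α_h + ω_h); in particular 0 is a simple eigenvalue of J* and all other eigenvalues of J* are real and strictly negative. -/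

import Mathlib

open Polynomial

set_option maxRecDepth 8000 in
set_option maxHeartbeats 1600000 in
lemma aux_spec_root_sirs (M : Matrix (Fin 5) (Fin 5) ℂ) (z : ℂ) (hz : z ∈ spectrum ℂ M) :
    M.charpoly.eval z = 0 := by
  rw [spectrum.mem_iff] at hz
  have h2 : algebraMap ℂ (Matrix (Fin 5) (Fin 5) ℂ) z = Matrix.scalar (Fin 5) z := by
    rw [Matrix.algebraMap_eq_diagonal, Matrix.scalar_apply]
    simp
  rw [h2, Matrix.isUnit_iff_isUnit_det, isUnit_iff_ne_zero, not_not] at hz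
  rw [Matrix.charpoly, eval_det, Matrix.matPolyEquiv_charmatrix]
  simpa using hz

set_option maxHeartbeats 1600000 in
lemma aux_charpoly_sirs (a b c ph bh g d : ℝ) (J : Matrix (Fin 5) (Fin 5) ℝ)
    (hdb : d * bh = b * ph)
    (hJ : J = !![-a, 0, c, 0, -bh; 0, -b, 0, 0, bh; 0, g, -(a+c), 0, 0;
                 0, -d, 0, -ph, 0; 0, d, 0, 0, -ph]) :
    J.charpoly = X * (X + C (b+ph)) * (X + C a) * (X + C ph) * (X + C (a+c)) := by
  have hc : Matrix.charmatrix J = !![X + C a, 0, -C c, 0, C bh;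
      0, X + C b, 0, 0, -C bh;
      0, -C g, X + C a + C c, 0, 0;
      0, C d, 0, X + C ph, 0;
      0, -C d, 0, 0, X + C ph] := by
    subst hJ
    ext i j
    fin_cases i <;> fin_cases j <;>
      simp [Matrix.charmatrix_apply, Matrix.diagonal, Matrix.vecHead, Matrix.vecTail, C_add] <;>
      ring
  rw [Matrix.charpoly, hc, show (C (b+ph) : ℝ[X]) = C b + C ph from C_add,
    show (C (a+c) : ℝ[X]) = C a + C c from C_add]
  rw [Matrix.det_succ_column_zero]
  simp [Fin.sum_univ_succ, Matrix.det_succ_column_zero (Matrix.submatrix _ _ _),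
    Matrix.vecHead, Matrix.vecTail,
    Matrix.det_fin_three, Fin.succAbove, Fin.castSucc, Fin.castAdd, Fin.castLE,
    Matrix.cons_val_succ, Matrix.cons_val_zero]
  have h2 : C d * C bh = C b * C ph := by rw [← C_mul, ← C_mul, hdb]
  linear_combination (-((X + C a) * (X + C ph) * (X + C a + C c))) * h2

lemma aux_rm_zero_sirs {r : ℝ} (hr : 0 < r) :
    (X + C r : ℝ[X]).rootMultiplicity 0 = 0 := by
  apply rootMultiplicity_eq_zero
  simp [IsRoot]
  exact hr.ne'

lemma aux_ne_zero_sirs {r : ℝ} : (X + C r : ℝ[X]) ≠ 0 := by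
  simpa [sub_neg_eq_add] using X_sub_C_ne_zero (-r)

/-- Spectrum of the Jacobian at the bifurcation point: the characteristic polynomial of
`J*` equals `λ(λ + k + α_v)(λ + α_h)(λ + α_v)(λ + α_h + ω_h)`; in particular `0` is a
simple eigenvalue and all other eigenvalues are real and strictly negative. -/
theorem sirs_malaria_bifurcation_spectrum
    (Λh αh γh ρh ωh Λv αv βv βh k d : ℝ)
    (hΛh : 0 < Λh) (hαh : 0 < αh) (hγh : 0 < γh) (hρh : 0 < ρh) (hωh : 0 < ωh)
    (hΛv : 0 < Λv) (hαv : 0 < αv) (hβv : 0 < βv)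
    (hk : k = γh + ρh + αh)
    (hd : d = βv * Λv * αh / (αv * Λh))
    (hβh : βh = Λh * αv ^ 2 * k / (βv * Λv * αh))
    (J : Matrix (Fin 5) (Fin 5) ℝ)
    (hJ : J = !![-αh, 0, ωh, 0, -βh;
                 0, -k, 0, 0, βh;
                 0, γh, -(αh + ωh), 0, 0;
                 0, -d, 0, -αv, 0;
                 0, d, 0, 0, -αv]) :
    J.charpoly =
        X * (X + C (k + αv)) * (X + C αh) * (X + C αv) * (X + C (αh + ωh)) ∧
      J.charpoly.rootMultiplicity 0 = 1 ∧
      ∀ z ∈ spectrum ℂ (J.map (algebraMap ℝ ℂ)), z ≠ 0 → z.im = 0 ∧ z.re < 0 := by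
  have hk0 : 0 < k := by rw [hk]; positivity
  have hdb : d * βh = k * αv := by
    rw [hd, hβh]
    field_simp
  have hcp : J.charpoly =
      X * (X + C (k + αv)) * (X + C αh) * (X + C αv) * (X + C (αh + ωh)) :=
    aux_charpoly_sirs αh k ωh αv βh γh d J hdb hJ
  have hX : (X : ℝ[X]).rootMultiplicity 0 = 1 := by
    simpa using rootMultiplicity_X_sub_C_self (x := (0 : ℝ))
  refine ⟨hcp, ?_, ?_⟩
  · rw [hcp]
    have n1 : (X + C (k + αv) : ℝ[X]) ≠ 0 := aux_ne_zero_sirs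
    have n2 : (X + C αh : ℝ[X]) ≠ 0 := aux_ne_zero_sirs
    have n3 : (X + C αv : ℝ[X]) ≠ 0 := aux_ne_zero_sirs
    have n4 : (X + C (αh + ωh) : ℝ[X]) ≠ 0 := aux_ne_zero_sirs
    have nX : (X : ℝ[X]) ≠ 0 := X_ne_zero
    rw [rootMultiplicity_mul (mul_ne_zero (mul_ne_zero (mul_ne_zero (mul_ne_zero nX n1) n2) n3) n4),
      rootMultiplicity_mul (mul_ne_zero (mul_ne_zero (mul_ne_zero nX n1) n2) n3),
      rootMultiplicity_mul (mul_ne_zero (mul_ne_zero nX n1) n2),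
      rootMultiplicity_mul (mul_ne_zero nX n1)]
    rw [hX, aux_rm_zero_sirs (by positivity), aux_rm_zero_sirs hαh,
      aux_rm_zero_sirs hαv, aux_rm_zero_sirs (by positivity)]
  · intro z hz hz0
    have h0 := aux_spec_root_sirs _ z hz
    rw [Matrix.charpoly_map, hcp] at h0
    simp only [Polynomial.map_mul, Polynomial.map_add, Polynomial.map_X, Polynomial.map_C,
      eval_mul, eval_add, eval_X, eval_C, Complex.coe_algebraMap] at h0
    have : ∃ r : ℝ, 0 < r ∧ z = -(r : ℂ) := by
      rcases mul_eq_zero.mp h0 with h | h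
      · rcases mul_eq_zero.mp h with h | h
        · rcases mul_eq_zero.mp h with h | h
          · rcases mul_eq_zero.mp h with h | h
            · exact absurd h hz0
            · exact ⟨k + αv, by positivity, by linear_combination h⟩
          · exact ⟨αh, hαh, by linear_combination h⟩
        · exact ⟨αv, hαv, by linear_combination h⟩
      · exact ⟨αh + ωh, by positivity, by linear_combination h⟩
    obtain ⟨r, hr, rfl⟩ := this
    constructor
    · simp
    · simpa using hr
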